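/- Let f be as above (f(x) = -1/2, x, 1/2 on the three pieces of [-1,1]). Then ∫_{-1}^{1} (f(x) - (11/16)·x)² dx ≤ ∫_{-1}^{1} (f(x) - c·x)² dx for every c ∈ ℝ, and 11/16 > max_{x∈[-1,1]} f(x) = 1/2. -/

import Mathlib

theorem stmt_1 (f : ℝ → ℝ)
    (hf : ∀ x, f x = max (-(1/2)) (min (1/2) x)) :
    (∀ c : ℝ, (∫ x in (-1:ℝ)..1, (f x - (11/16) * x) ^ 2) ≤
        ∫ x in (-1:ℝ)..1, (f x - c * x) ^ 2) ∧
    IsGreatest (f '' Set.Icc (-1 : ℝ) 1) (1/2) ∧ (11:ℝ)/16 > 1/2 := by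
  have key : ∀ c : ℝ, (∫ x in (-1:ℝ)..1, (f x - c * x) ^ 2)
      = 1/3 - 11/12*c + 2/3*c^2 := by
    intro c
    -- split the integral
    have hint : ∀ a b : ℝ, IntervalIntegrable (fun x => (f x - c * x)^2)
        MeasureTheory.volume a b := by
      intro a b
      apply Continuous.intervalIntegrable
      have hfc : Continuous f := by
        have : f = fun x => max (-(1/2)) (min (1/2) x) := funext hf
        rw [this]
        exact continuous_const.max (continuous_const.min continuous_id)
      fun_prop
    have split1 : (∫ x in (-1:ℝ)..1, (f x - c * x)^2)
        = (∫ x in (-1:ℝ)..(-(1/2):ℝ), (f x - c * x)^2)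
          + (∫ x in (-(1/2):ℝ)..(1/2:ℝ), (f x - c * x)^2)
          + (∫ x in (1/2:ℝ)..1, (f x - c * x)^2) := by
      rw [intervalIntegral.integral_add_adjacent_intervals (hint _ _) (hint _ _),
          intervalIntegral.integral_add_adjacent_intervals (hint _ _) (hint _ _)]
    have e1 : (∫ x in (-1:ℝ)..(-(1/2):ℝ), (f x - c * x)^2)
        = ∫ x in (-1:ℝ)..(-(1/2):ℝ), (-(1/2) - c * x)^2 := by
      apply intervalIntegral.integral_congr
      intro x hx
      rw [Set.uIcc_of_le (by norm_num)] at hx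
      have hx2 : x ≤ -(1/2) := hx.2
      simp only [hf]
      rw [min_eq_right (by linarith), max_eq_left (by linarith)]
    have e2 : (∫ x in (-(1/2):ℝ)..(1/2:ℝ), (f x - c * x)^2)
        = ∫ x in (-(1/2):ℝ)..(1/2:ℝ), (x - c * x)^2 := by
      apply intervalIntegral.integral_congr
      intro x hx
      rw [Set.uIcc_of_le (by norm_num)] at hx
      simp only [hf]
      rw [min_eq_right hx.2, max_eq_right hx.1]
    have e3 : (∫ x in (1/2:ℝ)..1, (f x - c * x)^2)
        = ∫ x in (1/2:ℝ)..1, ((1/2:ℝ) - c * x)^2 := by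
      apply intervalIntegral.integral_congr
      intro x hx
      rw [Set.uIcc_of_le (by norm_num)] at hx
      have hx1 : (1/2:ℝ) ≤ x := hx.1
      simp only [hf]
      rw [min_eq_left hx1, max_eq_right (by norm_num)]
    have I1 : (∫ x in (-1:ℝ)..(-(1/2):ℝ), (-(1/2) - c * x)^2)
        = 1/8 - 3/8*c + 7/24*c^2 := by
      have hd : ∀ x ∈ Set.uIcc (-1:ℝ) (-(1/2):ℝ),
          HasDerivAt (fun x => x/4 + c*x^2/2 + c^2*x^3/3) ((-(1/2) - c * x)^2) x := by
        intro x _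
        have h := (((hasDerivAt_id x).div_const 4).add
            (((hasDerivAt_pow 2 x).const_mul c).div_const 2)).add
            (((hasDerivAt_pow 3 x).const_mul (c^2)).div_const 3)
        exact h.congr_deriv (by ring)
      rw [intervalIntegral.integral_eq_sub_of_hasDerivAt hd
        (by apply Continuous.intervalIntegrable; fun_prop)]
      ring
    have I2 : (∫ x in (-(1/2):ℝ)..(1/2:ℝ), (x - c * x)^2)
        = (1-c)^2/12 := by
      have hd : ∀ x ∈ Set.uIcc (-(1/2):ℝ) (1/2:ℝ),
          HasDerivAt (fun x => (1-c)^2*x^3/3) ((x - c * x)^2) x := by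
        intro x _
        have h := ((hasDerivAt_pow 3 x).const_mul ((1-c)^2)).div_const 3
        exact h.congr_deriv (by ring)
      rw [intervalIntegral.integral_eq_sub_of_hasDerivAt hd
        (by apply Continuous.intervalIntegrable; fun_prop)]
      ring
    have I3 : (∫ x in (1/2:ℝ)..1, ((1/2:ℝ) - c * x)^2)
        = 1/8 - 3/8*c + 7/24*c^2 := by
      have hd : ∀ x ∈ Set.uIcc (1/2:ℝ) 1,
          HasDerivAt (fun x => x/4 - c*x^2/2 + c^2*x^3/3) (((1/2:ℝ) - c * x)^2) x := by
        intro x _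
        have h := (((hasDerivAt_id x).div_const 4).sub
            (((hasDerivAt_pow 2 x).const_mul c).div_const 2)).add
            (((hasDerivAt_pow 3 x).const_mul (c^2)).div_const 3)
        exact h.congr_deriv (by ring)
      rw [intervalIntegral.integral_eq_sub_of_hasDerivAt hd
        (by apply Continuous.intervalIntegrable; fun_prop)]
      ring
    rw [split1, e1, e2, e3, I1, I2, I3]
    ring
  refine ⟨?_, ⟨⟨1/2, by norm_num, by rw [hf]; norm_num⟩, ?_⟩, by norm_num⟩
  · intro c
    rw [key, key]
    nlinarith [sq_nonneg (c - 11/16)]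
  · rintro y ⟨x, _, rfl⟩
    rw [hf]
    have : min (1/2:ℝ) x ≤ 1/2 := min_le_left _ _
    exact max_le (by norm_num) this
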